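/- Let n ≥ 2 and suppose δ_n² > 0. Among all estimators of the form Σ̂ = ρ₁ I + ρ₂ S_n with nonrandom scalar coefficients ρ₁, ρ₂, the expected loss E[‖Σ̂ − Σ_n‖_n²] is uniquely minimized by Σ_n* = (β_n²/δ_n²) μ_n I + (α_n²/δ_n²) S_n, and the minimal value is E[‖Σ_n* − Σ_n‖_n²] = α_n² β_n² / δ_n². (Here one uses that E[S_n] = Σ_n and α_n² + β_n² = δ_n².) -/

import Mathlib

open MeasureTheory ProbabilityTheory Matrix Filter
open scoped Topology

noncomputable section

namespace LW

variable {Ω : Type*} [MeasurableSpace Ω]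

/-- The Borel/product measurable structure on matrices. -/
instance {pn n : ℕ} : MeasurableSpace (Matrix (Fin pn) (Fin n) ℝ) :=
  inferInstanceAs (MeasurableSpace (Fin pn → Fin n → ℝ))

/-- Normalized Frobenius inner product `⟨A,B⟩ₙ = tr(A Bᵀ)/p`. -/
def inp {pn : ℕ} (A B : Matrix (Fin pn) (Fin pn) ℝ) : ℝ :=
  (A * Bᵀ).trace / pn

/-- Normalized Frobenius norm `‖A‖ₙ = √(tr(A Aᵀ)/p)`. -/
def nrm {pn : ℕ} (A : Matrix (Fin pn) (Fin pn) ℝ) : ℝ :=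
  Real.sqrt ((A * Aᵀ).trace / pn)

/-- Column-centered data matrix `x̃_{·k} = x_{·k} - (1/n) ∑_{k'} x_{·k'}`. -/
def ctr {pn n : ℕ} (X : Matrix (Fin pn) (Fin n) ℝ) : Matrix (Fin pn) (Fin n) ℝ :=
  Matrix.of fun i k => X i k - (∑ k', X i k') / n

/-- Sample covariance `S = X̃ X̃ᵀ/(n-1)`. -/
def sampleCov {pn n : ℕ} (X : Matrix (Fin pn) (Fin n) ℝ) : Matrix (Fin pn) (Fin pn) ℝ :=
  ((n : ℝ) - 1)⁻¹ • (ctr X * (ctr X)ᵀ)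

/-- Centered outer product `x̃_{·k} x̃_{·k}ᵀ`. -/
def outerC {pn n : ℕ} (X : Matrix (Fin pn) (Fin n) ℝ) (k : Fin n) :
    Matrix (Fin pn) (Fin pn) ℝ :=
  Matrix.of fun i j => ctr X i k * ctr X j k

/-- Covariance of two real random variables. -/
def covP (P : Measure Ω) (f g : Ω → ℝ) : ℝ :=
  (∫ ω, f ω * g ω ∂P) - (∫ ω, f ω ∂P) * (∫ ω, g ω ∂P)

/-- Variance `Var[f] = E[(f - E f)²]`. -/
def varP (P : Measure Ω) (f : Ω → ℝ) : ℝ :=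
  ∫ ω, (f ω - ∫ ω', f ω' ∂P) ^ 2 ∂P

/-- `μₙ = ⟨Σ, I⟩ₙ`. -/
def muS {pn : ℕ} (Sig : Matrix (Fin pn) (Fin pn) ℝ) : ℝ := inp Sig 1

/-- `αₙ² = ‖Σ − μ I‖ₙ²`. -/
def alpha2 {pn : ℕ} (Sig : Matrix (Fin pn) (Fin pn) ℝ) : ℝ := nrm (Sig - muS Sig • 1) ^ 2

/-- `βₙ² = E[‖S − Σ‖ₙ²]`. -/
def beta2 (P : Measure Ω) {pn n : ℕ} (X : Ω → Matrix (Fin pn) (Fin n) ℝ)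
    (Sig : Matrix (Fin pn) (Fin pn) ℝ) : ℝ :=
  ∫ ω, nrm (sampleCov (X ω) - Sig) ^ 2 ∂P

/-- `δₙ² = E[‖S − μ I‖ₙ²]`. -/
def delta2 (P : Measure Ω) {pn n : ℕ} (X : Ω → Matrix (Fin pn) (Fin n) ℝ)
    (Sig : Matrix (Fin pn) (Fin pn) ℝ) : ℝ :=
  ∫ ω, nrm (sampleCov (X ω) - muS Sig • 1) ^ 2 ∂P

/-- `mₙ = ⟨S, I⟩ₙ`. -/
def mE {pn n : ℕ} (X : Ω → Matrix (Fin pn) (Fin n) ℝ) (ω : Ω) : ℝ :=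
  inp (sampleCov (X ω)) 1

/-- `dₙ² = ‖S − mₙ I‖ₙ²`. -/
def d2E {pn n : ℕ} (X : Ω → Matrix (Fin pn) (Fin n) ℝ) (ω : Ω) : ℝ :=
  nrm (sampleCov (X ω) - mE X ω • 1) ^ 2

/-- `b̄ₙ² = (1/n²) ∑ₖ ‖(n/(n−1)) x̃ₖ x̃ₖᵀ − S‖ₙ²`. -/
def bbar2E {pn n : ℕ} (X : Ω → Matrix (Fin pn) (Fin n) ℝ) (ω : Ω) : ℝ :=
  (1 / (n : ℝ) ^ 2) *
    ∑ k : Fin n, nrm (((n : ℝ) / ((n : ℝ) - 1)) • outerC (X ω) k - sampleCov (X ω)) ^ 2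

def gammaC (n : ℕ) : ℝ := ((n : ℝ) * ((n : ℝ) - 1)) / ((n : ℝ) ^ 2 - 3 * (n : ℝ) + 3)
def lambdaC (n : ℕ) : ℝ :=
  ((n : ℝ) ^ 2 * ((n : ℝ) - 2)) / (((n : ℝ) - 1) * ((n : ℝ) ^ 2 - 3 * (n : ℝ) + 3))
def c0 (n : ℕ) : ℝ := 1 / gammaC n - 1 / (n : ℝ) - lambdaC n / (gammaC n * (n : ℝ) ^ 2)
def c1 (n : ℕ) : ℝ := lambdaC n / (gammaC n * (n : ℝ) ^ 2)
def c2 (pn n : ℕ) : ℝ := ((pn : ℝ) + 1) * c1 n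
def q0 (pn n : ℕ) : ℝ := ((n : ℝ) - 2) / ((pn : ℝ) * ((n : ℝ) - 1))
def q1 (pn n : ℕ) : ℝ := 1 / ((pn : ℝ) * ((n : ℝ) - 1))
def q2 (pn n : ℕ) : ℝ := ((pn : ℝ) - 1) / ((pn : ℝ) * ((n : ℝ) - 1))
def c0f (pn n : ℕ) : ℝ := c0 n + (c1 n - c2 pn n) * q0 pn n / (1 - q1 pn n - q2 pn n)
def c1f (pn n : ℕ) : ℝ := c1 n + (c1 n - c2 pn n) * q1 pn n / (1 - q1 pn n - q2 pn n)
def c2f (pn n : ℕ) : ℝ := c2 pn n - (c1 n - c2 pn n) * q2 pn n / (1 - q1 pn n - q2 pn n)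

/-- `bₙ² = (b̄ₙ² − c₁^f dₙ² − c₂^f mₙ²)/c₀^f`. -/
def b2E {pn n : ℕ} (X : Ω → Matrix (Fin pn) (Fin n) ℝ) (ω : Ω) : ℝ :=
  (bbar2E X ω - c1f pn n * d2E X ω - c2f pn n * (mE X ω) ^ 2) / c0f pn n

/-- `b_{n,u}² = min(max(bₙ², 0), dₙ²)`. -/
def b2uE {pn n : ℕ} (X : Ω → Matrix (Fin pn) (Fin n) ℝ) (ω : Ω) : ℝ :=
  min (max (b2E X ω) 0) (d2E X ω)

/-- `a_{n,u}² = dₙ² − b_{n,u}²`. -/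
def a2uE {pn n : ℕ} (X : Ω → Matrix (Fin pn) (Fin n) ℝ) (ω : Ω) : ℝ :=
  d2E X ω - b2uE X ω

/-- Translation-invariant linear shrinkage estimator `Sₙ*`. -/
def SstarU {pn n : ℕ} (X : Ω → Matrix (Fin pn) (Fin n) ℝ) (ω : Ω) :
    Matrix (Fin pn) (Fin pn) ℝ :=
  (b2uE X ω / d2E X ω) • (mE X ω • (1 : Matrix (Fin pn) (Fin pn) ℝ)) +
    (a2uE X ω / d2E X ω) • sampleCov (X ω)

/-- Oracle `Σₙ* = (βₙ²/δₙ²) μₙ I + (αₙ²/δₙ²) Sₙ`. -/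
def SigmaStar (P : Measure Ω) {pn n : ℕ} (X : Ω → Matrix (Fin pn) (Fin n) ℝ)
    (Sig : Matrix (Fin pn) (Fin pn) ℝ) (ω : Ω) : Matrix (Fin pn) (Fin pn) ℝ :=
  (beta2 P X Sig / delta2 P X Sig) • (muS Sig • (1 : Matrix (Fin pn) (Fin pn) ℝ)) +
    (alpha2 Sig / delta2 P X Sig) • sampleCov (X ω)

/-- `Σₙ** = μₙ I + ((⟨S,Σ⟩ₙ − mₙ μₙ)/dₙ²)(S − mₙ I)`. -/
def SigmaStarStar {pn n : ℕ} (X : Ω → Matrix (Fin pn) (Fin n) ℝ)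
    (Sig : Matrix (Fin pn) (Fin pn) ℝ) (ω : Ω) : Matrix (Fin pn) (Fin pn) ℝ :=
  muS Sig • (1 : Matrix (Fin pn) (Fin pn) ℝ) +
    ((inp (sampleCov (X ω)) Sig - mE X ω * muS Sig) / d2E X ω) •
      (sampleCov (X ω) - mE X ω • 1)

/-- Ledoit–Wolf recommended `b̄_{n,r}² = (1/(n−1)²) ∑ₖ ‖x̃ₖ x̃ₖᵀ − S‖ₙ²`. -/
def bbar2rE {pn n : ℕ} (X : Ω → Matrix (Fin pn) (Fin n) ℝ) (ω : Ω) : ℝ :=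
  (1 / ((n : ℝ) - 1) ^ 2) * ∑ k : Fin n, nrm (outerC (X ω) k - sampleCov (X ω)) ^ 2

def b2rE {pn n : ℕ} (X : Ω → Matrix (Fin pn) (Fin n) ℝ) (ω : Ω) : ℝ :=
  min (max (bbar2rE X ω) 0) (d2E X ω)

def a2rE {pn n : ℕ} (X : Ω → Matrix (Fin pn) (Fin n) ℝ) (ω : Ω) : ℝ :=
  d2E X ω - b2rE X ω

def SstarR {pn n : ℕ} (X : Ω → Matrix (Fin pn) (Fin n) ℝ) (ω : Ω) :
    Matrix (Fin pn) (Fin pn) ℝ :=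
  (b2rE X ω / d2E X ω) • (mE X ω • (1 : Matrix (Fin pn) (Fin pn) ℝ)) +
    (a2rE X ω / d2E X ω) • sampleCov (X ω)

def b2mE {pn n : ℕ} (X : Ω → Matrix (Fin pn) (Fin n) ℝ) (ω : Ω) : ℝ :=
  min (max (bbar2E X ω) 0) (d2E X ω)

def a2mE {pn n : ℕ} (X : Ω → Matrix (Fin pn) (Fin n) ℝ) (ω : Ω) : ℝ :=
  d2E X ω - b2mE X ω

def SstarM {pn n : ℕ} (X : Ω → Matrix (Fin pn) (Fin n) ℝ) (ω : Ω) :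
    Matrix (Fin pn) (Fin pn) ℝ :=
  (b2mE X ω / d2E X ω) • (mE X ω • (1 : Matrix (Fin pn) (Fin pn) ℝ)) +
    (a2mE X ω / d2E X ω) • sampleCov (X ω)

def mSE {pn n : ℕ} (X : Ω → Matrix (Fin pn) (Fin n) ℝ) (ω : Ω) : ℝ :=
  (((n : ℝ) - 1) / n) * mE X ω

def a2sE {pn n : ℕ} (X : Ω → Matrix (Fin pn) (Fin n) ℝ) (ω : Ω) : ℝ :=
  (((n : ℝ) - 1) / n) * (d2E X ω - b2mE X ω)

def SstarS {pn n : ℕ} (X : Ω → Matrix (Fin pn) (Fin n) ℝ) (ω : Ω) :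
    Matrix (Fin pn) (Fin pn) ℝ :=
  (((n : ℝ) - 1) / n) • SstarM X ω

/-- The quantity in Assumption 3:
`(pₙ²/n) · (∑_{(i,j,k,l)∈Qₙ} Cov[y_{i1}y_{j1}, y_{k1}y_{l1}]²) / |Qₙ|`. -/
def A3quant (P : Measure Ω) (p : ℕ → ℕ) (Γ : ∀ n, Matrix (Fin (p n)) (Fin (p n)) ℝ)
    (X : ∀ n, Ω → Matrix (Fin (p n)) (Fin n) ℝ) (n : ℕ) : ℝ :=
  if hn : 0 < n then
    (let y : Fin (p n) → Ω → ℝ := fun i ω => ((Γ n)ᵀ * X n ω) i ⟨0, hn⟩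
     let Q : Finset (Fin (p n) × Fin (p n) × Fin (p n) × Fin (p n)) :=
       Finset.univ.filter fun q =>
         q.1 ≠ q.2.1 ∧ q.1 ≠ q.2.2.1 ∧ q.1 ≠ q.2.2.2 ∧
           q.2.1 ≠ q.2.2.1 ∧ q.2.1 ≠ q.2.2.2 ∧ q.2.2.1 ≠ q.2.2.2
     ((p n : ℝ) ^ 2 / n) *
       ((∑ q ∈ Q, (covP P (fun ω => y q.1 ω * y q.2.1 ω)
           (fun ω => y q.2.2.1 ω * y q.2.2.2 ω)) ^ 2) / Q.card))
  else 0

/-- `θₙ² = Var[(1/pₙ) ∑ᵢ y_{i1}²]`. -/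
def theta2 (P : Measure Ω) (p : ℕ → ℕ) (Γ : ∀ n, Matrix (Fin (p n)) (Fin (p n)) ℝ)
    (X : ∀ n, Ω → Matrix (Fin (p n)) (Fin n) ℝ) (n : ℕ) : ℝ :=
  if hn : 0 < n then
    varP P (fun ω => (∑ i, (((Γ n)ᵀ * X n ω) i ⟨0, hn⟩) ^ 2) / p n)
  else 0

lemma enn_half : (1:ENNReal)/2 = 1/4 + 1/4 := by
  rw [ENNReal.div_add_div_same]
  rw [show (4:ENNReal) = 2*2 by norm_num, ENNReal.div_eq_div_iff] <;> norm_num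

lemma enn_one : (1:ENNReal)/1 = 1/2 + 1/2 := by
  rw [ENNReal.div_add_div_same, div_one, show (1:ENNReal)+1 = 2 by norm_num,
    ENNReal.div_self] <;> norm_num

lemma nrm_sq {pn : ℕ} (A : Matrix (Fin pn) (Fin pn) ℝ) :
    nrm A ^ 2 = (∑ i, ∑ j, A i j ^ 2) / pn := by
  have h : (A * Aᵀ).trace = ∑ i, ∑ j, A i j ^ 2 := by
    simp [Matrix.trace, Matrix.mul_apply, Matrix.diag, Matrix.transpose_apply, sq]
  rw [nrm, h, Real.sq_sqrt (by positivity)]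

lemma memℒp_mul_real {P : Measure Ω} {f g : Ω → ℝ}
    {p q r : ENNReal} (hf : MemLp f q P) (hg : MemLp g r P) (h : 1/p = 1/q + 1/r) :
    MemLp (fun ω => f ω * g ω) p P :=
  haveI : ENNReal.HolderTriple q r p := ⟨by simpa only [one_div] using h.symm⟩
  MemLp.smul hg hf


theorem stmt_0
    {Ω : Type*} [MeasurableSpace Ω] (P : Measure Ω) [IsProbabilityMeasure P]
    (n pn : ℕ) (hn : 2 ≤ n) (hpn : 1 ≤ pn)
    (X : Ω → Matrix (Fin pn) (Fin n) ℝ)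
    (Sig : Matrix (Fin pn) (Fin pn) ℝ)
    (hmeas : Measurable X)
    (hL8 : ∀ (i : Fin pn) (k : Fin n), MemLp (fun ω => X ω i k) 8 P)
    (hmean : ∀ (i : Fin pn) (k : Fin n), ∫ ω, X ω i k ∂P = 0)
    (hcov : ∀ (i j : Fin pn) (k : Fin n), ∫ ω, X ω i k * X ω j k ∂P = Sig i j)
    (hindep : iIndepFun
      (fun (k : Fin n) (ω : Ω) (i : Fin pn) => X ω i k) P)
    (hident : ∀ k k' : Fin n,
      IdentDistrib (fun ω (i : Fin pn) => X ω i k)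
        (fun ω (i : Fin pn) => X ω i k') P P)
    (hδ : 0 < delta2 P X Sig) :
    (∫ ω, nrm (SigmaStar P X Sig ω - Sig) ^ 2 ∂P
        = alpha2 Sig * beta2 P X Sig / delta2 P X Sig) ∧
    (∀ ρ1 ρ2 : ℝ,
      alpha2 Sig * beta2 P X Sig / delta2 P X Sig
        ≤ ∫ ω, nrm (ρ1 • (1 : Matrix (Fin pn) (Fin pn) ℝ)
            + ρ2 • sampleCov (X ω) - Sig) ^ 2 ∂P) ∧
    (∀ ρ1 ρ2 : ℝ,
      (∫ ω, nrm (ρ1 • (1 : Matrix (Fin pn) (Fin pn) ℝ)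
          + ρ2 • sampleCov (X ω) - Sig) ^ 2 ∂P
        = alpha2 Sig * beta2 P X Sig / delta2 P X Sig) →
      ρ1 = beta2 P X Sig / delta2 P X Sig * muS Sig ∧
        ρ2 = alpha2 Sig / delta2 P X Sig) := by
  classical
  have hnR : (2:ℝ) ≤ (n:ℝ) := by exact_mod_cast hn
  have hn0 : (n:ℝ) ≠ 0 := by linarith
  have hn1 : (n:ℝ) - 1 ≠ 0 := by linarith
  have hpnR : (1:ℝ) ≤ (pn:ℝ) := by exact_mod_cast hpn
  have hpn0 : (pn:ℝ) ≠ 0 := by linarith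
  have hX4 : ∀ (i : Fin pn) (k : Fin n), MemLp (fun ω => X ω i k) 4 P :=
    fun i k => (hL8 i k).mono_exponent (by norm_num)
  have hX2 : ∀ (i : Fin pn) (k : Fin n), MemLp (fun ω => X ω i k) 2 P :=
    fun i k => (hL8 i k).mono_exponent (by norm_num)
  have hXX_int : ∀ (i j : Fin pn) (k k' : Fin n),
      Integrable (fun ω => X ω i k * X ω j k') P :=
    fun i j k k' => (memℒp_mul_real (hX2 i k) (hX2 j k') enn_one).integrable le_rfl
  have hprod : ∀ (i j : Fin pn) (k k' : Fin n),
      ∫ ω, X ω i k * X ω j k' ∂P = if k = k' then Sig i j else 0 := by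
    intro i j k k'
    by_cases hkk : k = k'
    · subst hkk; simp [hcov i j k]
    · have hind : IndepFun (fun ω => X ω i k) (fun ω => X ω j k') P :=
        (hindep.indepFun hkk).comp (measurable_pi_apply i) (measurable_pi_apply j)
      have h : ∫ ω, X ω i k * X ω j k' ∂P
          = (∫ ω, X ω i k ∂P) * ∫ ω, X ω j k' ∂P :=
        hind.integral_fun_mul_eq_mul_integral (hX2 i k).aestronglyMeasurable (hX2 j k').aestronglyMeasurable
      rw [if_neg hkk, h, hmean, hmean, mul_zero]
  have hctr_expand : ∀ (i j : Fin pn) (k : Fin n) (ω : Ω),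
      ctr (X ω) i k * ctr (X ω) j k
        = X ω i k * X ω j k
          - (∑ b, X ω i k * X ω j b) / n
          - (∑ a, X ω i a * X ω j k) / n
          + (∑ a, ∑ b, X ω i a * X ω j b) / ((n:ℝ)^2) := by
    intro i j k ω
    have h1 : ctr (X ω) i k = X ω i k - (∑ a, X ω i a) / n := rfl
    have h2 : ctr (X ω) j k = X ω j k - (∑ b, X ω j b) / n := rfl
    have e1 : X ω i k * (∑ b, X ω j b) = ∑ b, X ω i k * X ω j b :=
      Finset.mul_sum _ _ _
    have e2 : (∑ a, X ω i a) * X ω j k = ∑ a, X ω i a * X ω j k :=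
      Finset.sum_mul _ _ _
    have e3 : (∑ a, X ω i a) * (∑ b, X ω j b) = ∑ a, ∑ b, X ω i a * X ω j b :=
      Finset.sum_mul_sum _ _ _ _
    have key : ∀ A B S1 S2 : ℝ,
        (A - S1/n) * (B - S2/n)
          = A*B - (A*S2)/n - (S1*B)/n + (S1*S2)/((n:ℝ)^2) := by
      intro A B S1 S2; field_simp; ring
    rw [h1, h2, key, e1, e2, e3]
  have hEctr : ∀ (i j : Fin pn) (k : Fin n),
      ∫ ω, ctr (X ω) i k * ctr (X ω) j k ∂P = (((n:ℝ)-1)/n) * Sig i j := by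
    intro i j k
    have hint1 : Integrable (fun ω => X ω i k * X ω j k) P := hXX_int i j k k
    have hint2 : Integrable (fun ω => (∑ b, X ω i k * X ω j b) / (n:ℝ)) P :=
      (integrable_finset_sum _ fun b _ => hXX_int i j k b).div_const _
    have hint3 : Integrable (fun ω => (∑ a, X ω i a * X ω j k) / (n:ℝ)) P :=
      (integrable_finset_sum _ fun a _ => hXX_int i j a k).div_const _
    have hint4 : Integrable (fun ω => (∑ a, ∑ b, X ω i a * X ω j b) / ((n:ℝ)^2)) P :=
      (integrable_finset_sum _ fun a _ =>
        integrable_finset_sum _ fun b _ => hXX_int i j a b).div_const _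
    have e : ∫ ω, ctr (X ω) i k * ctr (X ω) j k ∂P
        = (∫ ω, X ω i k * X ω j k ∂P)
          - (∑ b, ∫ ω, X ω i k * X ω j b ∂P) / n
          - (∑ a, ∫ ω, X ω i a * X ω j k ∂P) / n
          + (∑ a, ∑ b, ∫ ω, X ω i a * X ω j b ∂P) / ((n:ℝ)^2) := by
      rw [show (fun ω => ctr (X ω) i k * ctr (X ω) j k)
          = fun ω => X ω i k * X ω j k
            - (∑ b, X ω i k * X ω j b) / n
            - (∑ a, X ω i a * X ω j k) / n
            + (∑ a, ∑ b, X ω i a * X ω j b) / ((n:ℝ)^2) from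
        funext fun ω => hctr_expand i j k ω]
      have hint12 : Integrable (fun ω => X ω i k * X ω j k
          - (∑ b, X ω i k * X ω j b) / (n:ℝ)) P := hint1.sub hint2
      have hint123 : Integrable (fun ω => X ω i k * X ω j k
          - (∑ b, X ω i k * X ω j b) / (n:ℝ)
          - (∑ a, X ω i a * X ω j k) / (n:ℝ)) P := hint12.sub hint3
      rw [integral_add hint123 hint4,
        integral_sub hint12 hint3, integral_sub hint1 hint2,
        integral_div, integral_div, integral_div,
        integral_finset_sum _ fun b _ => hXX_int i j k b,
        integral_finset_sum _ fun a _ => hXX_int i j a k,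
        integral_finset_sum _ fun a _ =>
          integrable_finset_sum _ fun b _ => hXX_int i j a b]
      congr 2
      exact Finset.sum_congr rfl fun a _ =>
        integral_finset_sum _ fun b _ => hXX_int i j a b
    rw [e]
    simp only [hprod]
    simp only [if_true]
    have s1 : (∑ b, if k = b then Sig i j else 0) = Sig i j := by
      simp [Finset.sum_ite_eq]
    have s2 : (∑ a, if a = k then Sig i j else 0) = Sig i j := by
      simp [Finset.sum_ite_eq']
    have s3 : (∑ a : Fin n, ∑ b, if a = b then Sig i j else 0) = (n:ℝ) * Sig i j := by
      have : ∀ a : Fin n, (∑ b, if a = b then Sig i j else 0) = Sig i j := by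
        intro a; simp [Finset.sum_ite_eq]
      simp only [this, Finset.sum_const, Finset.card_univ, Fintype.card_fin,
        nsmul_eq_mul]
    rw [s1, s2, s3]
    field_simp
    ring
  have hSentry : ∀ (ω : Ω) (i j : Fin pn), sampleCov (X ω) i j
      = ((n:ℝ)-1)⁻¹ * ∑ k, ctr (X ω) i k * ctr (X ω) j k := by
    intro ω i j
    simp [sampleCov, Matrix.mul_apply, Matrix.smul_apply, Matrix.transpose_apply,
      smul_eq_mul]
  have hctr4 : ∀ (i : Fin pn) (k : Fin n), MemLp (fun ω => ctr (X ω) i k) 4 P := by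
    intro i k
    have e : (fun ω => ctr (X ω) i k)
        = fun ω => X ω i k - (n:ℝ)⁻¹ * ∑ a, X ω i a := by
      funext ω
      show X ω i k - (∑ a, X ω i a)/n = _
      ring
    rw [e]
    exact (hX4 i k).sub ((memLp_finsetSum _ fun a _ => hX4 i a).const_mul _)
  have hctrmul2 : ∀ (i j : Fin pn) (k : Fin n),
      MemLp (fun ω => ctr (X ω) i k * ctr (X ω) j k) 2 P :=
    fun i j k => memℒp_mul_real (hctr4 i k) (hctr4 j k) enn_half
  have hS2 : ∀ i j : Fin pn, MemLp (fun ω => sampleCov (X ω) i j) 2 P := by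
    intro i j
    have e : (fun ω => sampleCov (X ω) i j)
        = fun ω => ((n:ℝ)-1)⁻¹ * ∑ k, ctr (X ω) i k * ctr (X ω) j k :=
      funext fun ω => hSentry ω i j
    rw [e]
    exact (memLp_finsetSum _ fun k _ => hctrmul2 i j k).const_mul _
  have hES : ∀ i j : Fin pn, ∫ ω, sampleCov (X ω) i j ∂P = Sig i j := by
    intro i j
    rw [show (fun ω => sampleCov (X ω) i j)
        = fun ω => ((n:ℝ)-1)⁻¹ * ∑ k, ctr (X ω) i k * ctr (X ω) j k from
      funext fun ω => hSentry ω i j]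
    rw [MeasureTheory.integral_const_mul,
      integral_finset_sum _ fun k _ => (hctrmul2 i j k).integrable one_le_two]
    simp only [hEctr, Finset.sum_const, Finset.card_univ, Fintype.card_fin,
      nsmul_eq_mul]
    field_simp
  have hBint : ∀ i j : Fin pn,
      Integrable (fun ω => sampleCov (X ω) i j - Sig i j) P :=
    fun i j => ((hS2 i j).integrable one_le_two).sub (integrable_const _)
  have hB0 : ∀ i j : Fin pn, ∫ ω, (sampleCov (X ω) i j - Sig i j) ∂P = 0 := by
    intro i j
    rw [integral_sub ((hS2 i j).integrable one_le_two) (integrable_const _),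
      hES, integral_const]
    simp
  have hBsq_int : ∀ i j : Fin pn,
      Integrable (fun ω => (sampleCov (X ω) i j - Sig i j)^2) P := by
    intro i j
    have hB2 : MemLp (fun ω => sampleCov (X ω) i j - Sig i j) 2 P :=
      (hS2 i j).sub (memLp_const _)
    have h := (memℒp_mul_real hB2 hB2 enn_one).integrable le_rfl
    simpa only [sq] using h
  have key : ∀ (a : ℝ) (C : Matrix (Fin pn) (Fin pn) ℝ),
      ∫ ω, nrm (a • (sampleCov (X ω) - Sig) + C) ^ 2 ∂P
        = a^2 * ((∑ i, ∑ j, ∫ ω, (sampleCov (X ω) i j - Sig i j)^2 ∂P) / pn)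
          + nrm C ^ 2 := by
    intro a C
    set g : Fin pn → Fin pn → Ω → ℝ := fun i j ω =>
      a^2 * (sampleCov (X ω) i j - Sig i j)^2
        + (2*a*C i j) * (sampleCov (X ω) i j - Sig i j) + (C i j)^2 with hg
    have hpt : ∀ ω, nrm (a • (sampleCov (X ω) - Sig) + C) ^ 2
        = (∑ i, ∑ j, g i j ω) / pn := by
      intro ω
      rw [nrm_sq]
      congr 1
      refine Finset.sum_congr rfl fun i _ => Finset.sum_congr rfl fun j _ => ?_
      have he : (a • (sampleCov (X ω) - Sig) + C) i j
          = a * (sampleCov (X ω) i j - Sig i j) + C i j := by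
        simp [Matrix.add_apply, Matrix.smul_apply, Matrix.sub_apply, smul_eq_mul]
      rw [he, hg]
      ring
    have hgint : ∀ (i j : Fin pn), Integrable (g i j) P := by
      intro i j
      rw [hg]
      exact (((hBsq_int i j).const_mul _).add ((hBint i j).const_mul _)).add
        (integrable_const _)
    have hgval : ∀ (i j : Fin pn), ∫ ω, g i j ω ∂P
        = a^2 * (∫ ω, (sampleCov (X ω) i j - Sig i j)^2 ∂P) + (C i j)^2 := by
      intro i j
      rw [hg]
      have h1 : Integrable (fun ω => a^2 * (sampleCov (X ω) i j - Sig i j)^2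
          + (2*a*C i j) * (sampleCov (X ω) i j - Sig i j)) P :=
        ((hBsq_int i j).const_mul _).add ((hBint i j).const_mul _)
      rw [integral_add h1 (integrable_const _),
        integral_add ((hBsq_int i j).const_mul _) ((hBint i j).const_mul _),
        MeasureTheory.integral_const_mul, MeasureTheory.integral_const_mul,
        hB0, integral_const]
      simp
    calc ∫ ω, nrm (a • (sampleCov (X ω) - Sig) + C) ^ 2 ∂P
        = ∫ ω, (∑ i, ∑ j, g i j ω) / pn ∂P := by
          exact integral_congr_ae (Filter.Eventually.of_forall hpt)
      _ = (∑ i, ∑ j, ∫ ω, g i j ω ∂P) / pn := by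
          rw [integral_div,
            integral_finset_sum _ fun i _ => integrable_finset_sum _ fun j _ => hgint i j]
          congr 1
          exact Finset.sum_congr rfl fun i _ =>
            integral_finset_sum _ fun j _ => hgint i j
      _ = (∑ i, ∑ j, (a^2 * (∫ ω, (sampleCov (X ω) i j - Sig i j)^2 ∂P) + (C i j)^2)) / pn := by
          simp only [hgval]
      _ = a^2 * ((∑ i, ∑ j, ∫ ω, (sampleCov (X ω) i j - Sig i j)^2 ∂P) / pn)
            + nrm C ^ 2 := by
          rw [nrm_sq]
          simp only [Finset.sum_add_distrib, ← Finset.mul_sum]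
          rw [add_div]
          ring
  have hbeta : beta2 P X Sig
      = (∑ i, ∑ j, ∫ ω, (sampleCov (X ω) i j - Sig i j)^2 ∂P) / pn := by
    have h := key 1 0
    simp only [one_smul, add_zero, one_pow, one_mul] at h
    rw [beta2, h, nrm_sq]
    simp
  have hdelta : delta2 P X Sig = beta2 P X Sig + alpha2 Sig := by
    have h := key 1 (Sig - muS Sig • 1)
    have e : ∀ ω : Ω, (1:ℝ) • (sampleCov (X ω) - Sig) + (Sig - muS Sig • 1)
        = sampleCov (X ω) - muS Sig • 1 := by
      intro ω
      rw [one_smul, sub_add_sub_cancel]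
    simp only [e, one_pow, one_mul] at h
    rw [delta2, h, hbeta, alpha2]
  have hmu1 : muS Sig = (∑ i, Sig i i) / pn := by
    simp [muS, inp, Matrix.trace, Matrix.diag]
  have hCnrm : ∀ t s : ℝ,
      nrm (t • (1 : Matrix (Fin pn) (Fin pn) ℝ) + s • (Sig - muS Sig • 1)) ^ 2
        = t^2 + s^2 * alpha2 Sig := by
    intro t s
    have hexp : ∀ i j : Fin pn,
        ((t • (1 : Matrix (Fin pn) (Fin pn) ℝ) + s • (Sig - muS Sig • 1)) i j)^2
          = t^2 * (if i = j then (1:ℝ) else 0)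
            + (2*t*s) * (if i = j then (Sig - muS Sig • 1) i j else 0)
            + s^2 * ((Sig - muS Sig • 1) i j)^2 := by
      intro i j
      have he : (t • (1 : Matrix (Fin pn) (Fin pn) ℝ) + s • (Sig - muS Sig • 1)) i j
          = t * (if i = j then (1:ℝ) else 0) + s * (Sig - muS Sig • 1) i j := by
        simp [Matrix.add_apply, Matrix.smul_apply, Matrix.one_apply, smul_eq_mul]
      rw [he]
      by_cases h : i = j <;> simp [h] <;> ring
    have h1 : (∑ i : Fin pn, ∑ j : Fin pn, if i = j then (1:ℝ) else 0) = pn := by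
      simp [Finset.sum_ite_eq]
    have h2 : (∑ i : Fin pn, ∑ j : Fin pn,
        if i = j then (Sig - muS Sig • 1) i j else 0) = 0 := by
      have hrow : ∀ i : Fin pn,
          (∑ j : Fin pn, if i = j then (Sig - muS Sig • 1) i j else 0)
            = Sig i i - muS Sig := by
        intro i
        rw [Finset.sum_ite_eq]
        simp [Matrix.sub_apply, Matrix.smul_apply, Matrix.one_apply]
      simp only [hrow]
      rw [Finset.sum_sub_distrib, Finset.sum_const, Finset.card_univ,
        Fintype.card_fin, nsmul_eq_mul, hmu1]
      field_simp
      ring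
    rw [nrm_sq, alpha2, nrm_sq]
    simp only [hexp, Finset.sum_add_distrib, ← Finset.mul_sum]
    rw [h1, h2]
    field_simp
    ring
  have hF : ∀ ρ1 ρ2 : ℝ,
      ∫ ω, nrm (ρ1 • (1 : Matrix (Fin pn) (Fin pn) ℝ)
          + ρ2 • sampleCov (X ω) - Sig) ^ 2 ∂P
        = (ρ1 + (ρ2 - 1) * muS Sig)^2 + (ρ2 - 1)^2 * alpha2 Sig
          + ρ2^2 * beta2 P X Sig := by
    intro ρ1 ρ2
    have e : ∀ ω : Ω, ρ1 • (1 : Matrix (Fin pn) (Fin pn) ℝ)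
          + ρ2 • sampleCov (X ω) - Sig
        = ρ2 • (sampleCov (X ω) - Sig)
          + ((ρ1 + (ρ2 - 1) * muS Sig) • (1 : Matrix (Fin pn) (Fin pn) ℝ)
            + (ρ2 - 1) • (Sig - muS Sig • 1)) := by
      intro ω
      module
    simp only [e]
    rw [key ρ2 _, hCnrm, ← hbeta]
    ring
  have hne : delta2 P X Sig ≠ 0 := ne_of_gt hδ
  have halg : alpha2 Sig = delta2 P X Sig - beta2 P X Sig := by
    rw [hdelta]; ring
  refine ⟨?_, ?_, ?_⟩
  · have e : ∀ ω : Ω, SigmaStar P X Sig ω - Sig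
        = (beta2 P X Sig / delta2 P X Sig * muS Sig)
            • (1 : Matrix (Fin pn) (Fin pn) ℝ)
          + (alpha2 Sig / delta2 P X Sig) • sampleCov (X ω) - Sig := by
      intro ω
      rw [SigmaStar, smul_smul]
    simp only [e]
    rw [hF]
    rw [halg]
    field_simp
    ring
  · intro ρ1 ρ2
    rw [hF]
    have key2 : (ρ2 - 1)^2 * alpha2 Sig + ρ2^2 * beta2 P X Sig
        - alpha2 Sig * beta2 P X Sig / delta2 P X Sig
        = delta2 P X Sig * (ρ2 - alpha2 Sig / delta2 P X Sig)^2 := by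
      rw [halg]
      field_simp
      ring
    nlinarith [sq_nonneg (ρ1 + (ρ2 - 1) * muS Sig),
      mul_nonneg hδ.le (sq_nonneg (ρ2 - alpha2 Sig / delta2 P X Sig))]
  · intro ρ1 ρ2 heq
    rw [hF] at heq
    have key2 : (ρ2 - 1)^2 * alpha2 Sig + ρ2^2 * beta2 P X Sig
        - alpha2 Sig * beta2 P X Sig / delta2 P X Sig
        = delta2 P X Sig * (ρ2 - alpha2 Sig / delta2 P X Sig)^2 := by
      rw [halg]
      field_simp
      ring
    have h0 : (ρ1 + (ρ2 - 1) * muS Sig)^2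
        + delta2 P X Sig * (ρ2 - alpha2 Sig / delta2 P X Sig)^2 = 0 := by
      linear_combination heq - key2
    have hds : delta2 P X Sig * (ρ2 - alpha2 Sig / delta2 P X Sig)^2 = 0 := by
      have g1 := sq_nonneg (ρ1 + (ρ2 - 1) * muS Sig)
      have g2 := mul_nonneg hδ.le (sq_nonneg (ρ2 - alpha2 Sig / delta2 P X Sig))
      linarith
    have h2 : ρ2 - alpha2 Sig / delta2 P X Sig = 0 := by
      rcases mul_eq_zero.mp hds with h | h
      · exact absurd h hne
      · exact sq_eq_zero_iff.mp h
    have h3 : ρ1 + (ρ2 - 1) * muS Sig = 0 := by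
      have ht2 : (ρ1 + (ρ2 - 1) * muS Sig)^2 = 0 := by linarith
      exact sq_eq_zero_iff.mp ht2
    have hρ2 : ρ2 = alpha2 Sig / delta2 P X Sig := by linarith
    refine ⟨?_, hρ2⟩
    rw [hρ2] at h3
    have : ρ1 = (1 - alpha2 Sig / delta2 P X Sig) * muS Sig := by linarith
    rw [this, halg]
    field_simp
    ring





end LW
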